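/- Let V̂ : ℝ³ → ℝ be continuous, nonnegative, integrable, with V̂ ∈ L², V̂(0) > 0, and V̂(p) = V̂(−p). Let μ > 0. Then for every (γ, α, ρ₀) in the domain D (γ ∈ L¹((1+p²)dp), γ ≥ 0, α² ≤ γ² + γ, ρ₀ ≥ 0), there are constants ε > 0, C (independent of the state) such that F(γ, α, ρ₀) ≥ ∫ p² γ(p) dp + ε(ρ₀² + ρ_γ²) − C, where ρ_γ = ∫γ. -/

import Mathlib

open MeasureTheory

abbrev E3 := EuclideanSpace ℝ (Fin 3)

/-- The Bogoliubov energy functional. -/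
noncomputable def bogF (Vhat : E3 → ℝ) (μ : ℝ) (γ α : E3 → ℝ) (ρ₀ : ℝ) : ℝ :=
  (∫ p, ‖p‖ ^ 2 * γ p) - μ * (ρ₀ + ∫ p, γ p) + Vhat 0 / 2 * (ρ₀ + ∫ p, γ p) ^ 2 +
    ρ₀ * (∫ p, Vhat p * (γ p + α p)) +
    1 / 2 * ∫ p, ∫ q, Vhat (p - q) * (γ p * γ q + α p * α q)

open scoped ENNReal

private lemma aux_abs {g al : ℝ} (hg : 0 ≤ g) (h : al ^ 2 ≤ g ^ 2 + g) :
    |al| ≤ g + min (Real.sqrt g) (1 / 2) := by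
  set m := min (Real.sqrt g) (1 / 2) with hm
  have hm0 : 0 ≤ m := le_min (Real.sqrt_nonneg g) (by norm_num)
  have hkey : g ≤ 2 * g * m + m ^ 2 := by
    rcases le_total (Real.sqrt g) (1 / 2) with hc | hc
    · rw [hm, min_eq_left hc]
      have h2 : Real.sqrt g ^ 2 = g := Real.sq_sqrt hg
      nlinarith [Real.sqrt_nonneg g]
    · rw [hm, min_eq_right hc]
      nlinarith
  have h2 : al ^ 2 ≤ (g + m) ^ 2 := by nlinarith
  calc |al| = Real.sqrt (al ^ 2) := (Real.sqrt_sq_eq_abs al).symm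
    _ ≤ Real.sqrt ((g + m) ^ 2) := Real.sqrt_le_sqrt h2
    _ = |g + m| := Real.sqrt_sq_eq_abs _
    _ = g + m := abs_of_nonneg (by linarith)

private lemma aux_nhalf {g al : ℝ} (hg : 0 ≤ g) (h : al ^ 2 ≤ g ^ 2 + g) :
    -(1 / 2) ≤ g + al := by
  have h1 := aux_abs hg h
  have h2 : min (Real.sqrt g) (1 / 2) ≤ 1 / 2 := min_le_right _ _
  have h3 := neg_abs_le al
  linarith

private lemma quad_bound {lam : ℝ} (hlam : 0 < lam) (A : ℝ) :
    ∃ C : ℝ, ∀ z, 0 ≤ z → A * z - lam * z ^ 2 ≤ C := by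
  refine ⟨A ^ 2 / (4 * lam), fun z hz => ?_⟩
  have h4 : (0:ℝ) < 4 * lam := by linarith
  have hd : A ^ 2 / (4 * lam) * (4 * lam) = A ^ 2 := by field_simp
  nlinarith [sq_nonneg (A - 2 * lam * z)]

private lemma cubic_bound {lam : ℝ} (hlam : 0 < lam) (B : ℝ) :
    ∃ Bc : ℝ, 0 ≤ Bc ∧ ∀ t, 0 ≤ t → B * t ^ 3 ≤ lam * t ^ 4 + Bc * t ^ 2 := by
  refine ⟨B ^ 2 / (4 * lam), by positivity, fun t ht => ?_⟩
  have h4 : (0:ℝ) < 4 * lam := by linarith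
  have hd : B ^ 2 / (4 * lam) * (4 * lam) = B ^ 2 := by field_simp
  have h2 : B * t ≤ lam * t ^ 2 + B ^ 2 / (4 * lam) := by
    nlinarith [sq_nonneg (B - 2 * lam * t)]
  calc B * t ^ 3 = (B * t) * t ^ 2 := by ring
    _ ≤ (lam * t ^ 2 + B ^ 2 / (4 * lam)) * t ^ 2 :=
      mul_le_mul_of_nonneg_right h2 (sq_nonneg t)
    _ = lam * t ^ 4 + B ^ 2 / (4 * lam) * t ^ 2 := by ring

private lemma lower_int {f : E3 → ℝ} {B : ℝ≥0∞} (hB : B ≠ ∞)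
    (h : ∫⁻ x, ENNReal.ofReal (-(f x)) ≤ B) : -(B.toReal) ≤ ∫ x, f x := by
  by_cases hf : Integrable f volume
  · rw [integral_eq_lintegral_pos_part_sub_lintegral_neg_part hf]
    have h2 := ENNReal.toReal_mono hB h
    have h3 : (0:ℝ) ≤ (∫⁻ x, ENNReal.ofReal (f x)).toReal := ENNReal.toReal_nonneg
    linarith
  · rw [integral_undef hf]
    exact neg_nonpos.mpr ENNReal.toReal_nonneg

private lemma lint_shift_left (F : E3 → ℝ≥0∞) (hF : Measurable F) (p : E3) :
    ∫⁻ q, F (p - q) = ∫⁻ x, F x := by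
  rw [← lintegral_map hF (show Measurable fun q : E3 => p - q by fun_prop),
    Measure.map_sub_left_eq_self]

private lemma lint_shift_right (F : E3 → ℝ≥0∞) (hF : Measurable F) (q : E3) :
    ∫⁻ p, F (p - q) = ∫⁻ x, F x := by
  rw [← lintegral_map hF (show Measurable fun p : E3 => p - q by fun_prop),
    map_sub_right_eq_self]

private lemma emul_le_sq (a b : ℝ≥0∞) : a * b ≤ a ^ (2:ℝ) + b ^ (2:ℝ) := by
  have h2 : ∀ x : ℝ≥0∞, x * x = x ^ (2:ℝ) := fun x => by
    rw [show (2:ℝ) = ((2:ℕ):ℝ) by norm_num, ENNReal.rpow_natCast, sq]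
  rcases le_total a b with h | h
  · calc a * b ≤ b * b := mul_le_mul_left h b
      _ = b ^ (2:ℝ) := h2 b
      _ ≤ _ := le_add_self
  · calc a * b ≤ a * a := mul_le_mul_right h a
      _ = a ^ (2:ℝ) := h2 a
      _ ≤ _ := le_self_add

set_option maxHeartbeats 2000000 in
theorem stmt_6 (Vhat : E3 → ℝ) (μ : ℝ) (hμ : 0 < μ)
    (hVcont : Continuous Vhat) (hVpos : ∀ p, 0 ≤ Vhat p)
    (hVint : Integrable Vhat (volume : Measure E3))
    (hVL2 : MemLp Vhat 2 (volume : Measure E3))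
    (hV0 : 0 < Vhat 0) (hVsymm : ∀ p, Vhat p = Vhat (-p)) :
    ∃ ε > (0 : ℝ), ∃ C : ℝ, ∀ γ α : E3 → ℝ, ∀ ρ₀ : ℝ,
      Integrable γ (volume : Measure E3) →
      Integrable (fun p => ‖p‖ ^ 2 * γ p) (volume : Measure E3) →
      (∀ p, 0 ≤ γ p) → (∀ p, (α p) ^ 2 ≤ (γ p) ^ 2 + γ p) → 0 ≤ ρ₀ →
      bogF Vhat μ γ α ρ₀ ≥
        (∫ p, ‖p‖ ^ 2 * γ p) + ε * (ρ₀ ^ 2 + (∫ p, γ p) ^ 2) - C := by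
  classical
  set V0 : ℝ := Vhat 0 with hV0def
  -- constants
  set a : ℝ := ∫ p, Vhat p with ha_def
  have ha0 : 0 ≤ a := integral_nonneg hVpos
  have I1def : ∫⁻ p, ENNReal.ofReal (Vhat p) = ENNReal.ofReal a :=
    (ofReal_integral_eq_lintegral_ofReal hVint (Filter.Eventually.of_forall hVpos)).symm
  set eK : E3 → ℝ≥0∞ := fun x => ENNReal.ofReal (Vhat x) with heK
  have heKm : Measurable eK := ENNReal.measurable_ofReal.comp hVcont.measurable
  set I2 : ℝ≥0∞ := eLpNorm Vhat 2 volume with hI2def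
  have hI2ne : I2 ≠ ∞ := hVL2.2.ne
  have hI2eq : (∫⁻ x, (eK x) ^ (2:ℝ)) ^ (1/2 : ℝ) = I2 := by
    rw [hI2def, eLpNorm_eq_lintegral_rpow_enorm_toReal (by norm_num) (by norm_num)]
    norm_num
    congr 1
    exact lintegral_congr fun x => by rw [heK, Real.enorm_eq_ofReal (hVpos x)]
  set s2 : ℝ := I2.toReal with hs2def
  have hs2 : 0 ≤ s2 := ENNReal.toReal_nonneg
  obtain ⟨Bc, hBc0, hBc⟩ := cubic_bound (show (0:ℝ) < V0/8 by linarith) (s2/2)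
  obtain ⟨C1, hC1⟩ := quad_bound (show (0:ℝ) < V0/4 by linarith) (μ + a/2)
  obtain ⟨C2, hC2⟩ := quad_bound (show (0:ℝ) < V0/8 by linarith) (μ + 3*a/2 + Bc)
  refine ⟨V0/4, by linarith, C1 + C2, ?_⟩
  intro γ α ρ₀ hγint hTint hγpos hα hρ₀
  set R : ℝ := ∫ p, γ p with hRdef
  have hR0 : 0 ≤ R := integral_nonneg hγpos
  -- measurable modifications
  have hγae := hγint.aemeasurable
  set γb : E3 → ℝ := fun q => max (hγae.mk γ q) 0 with hγbdef
  have hγbm : Measurable γb := hγae.measurable_mk.max measurable_const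
  have hγbe : γ =ᵐ[volume] γb := by
    filter_upwards [hγae.ae_eq_mk] with q hq
    rw [hγbdef]
    simp only [← hq]
    rw [max_eq_left (hγpos q)]
  have hγb0 : ∀ q, 0 ≤ γb q := fun q => le_max_right _ _
  set gb : E3 → ℝ := fun q => min (Real.sqrt (γb q)) (1/2) with hgbdef
  have hgbm : Measurable gb :=
    (Real.continuous_sqrt.measurable.comp hγbm).min measurable_const
  have hgb0 : ∀ q, 0 ≤ gb q := fun q => le_min (Real.sqrt_nonneg _) (by norm_num)
  have hgbh : ∀ q, gb q ≤ 1/2 := fun q => min_le_right _ _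
  have hgb2 : ∀ q, gb q ^ 2 ≤ γb q := fun q => by
    calc gb q ^ 2 ≤ Real.sqrt (γb q) ^ 2 :=
      pow_le_pow_left₀ (hgb0 q) (min_le_left _ _) 2
    _ = γb q := Real.sq_sqrt (hγb0 q)
  set eγ : E3 → ℝ≥0∞ := fun q => ENNReal.ofReal (γb q) with heγ
  set eg : E3 → ℝ≥0∞ := fun q => ENNReal.ofReal (gb q) with heg
  have heγm : Measurable eγ := ENNReal.measurable_ofReal.comp hγbm
  have hegm : Measurable eg := ENNReal.measurable_ofReal.comp hgbm
  have hRe : ∫⁻ q, eγ q = ENNReal.ofReal R := by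
    rw [hRdef, show (∫ p, γ p) = ∫ p, γb p from integral_congr_ae hγbe]
    exact (ofReal_integral_eq_lintegral_ofReal (hγint.congr hγbe)
      (Filter.Eventually.of_forall hγb0)).symm
  have hEg2 : ∫⁻ q, eg q ^ (2:ℝ) ≤ ENNReal.ofReal R := by
    rw [← hRe]
    refine lintegral_mono fun q => ?_
    show ENNReal.ofReal (gb q) ^ (2:ℝ) ≤ ENNReal.ofReal (γb q)
    rw [ENNReal.ofReal_rpow_of_nonneg (hgb0 q) (by norm_num)]
    refine ENNReal.ofReal_le_ofReal ?_
    rw [show ((2:ℝ)) = ((2:ℕ):ℝ) by norm_num, Real.rpow_natCast]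
    exact hgb2 q
  -- A-term bound
  have hAterm : -(a/2) ≤ ∫ p, Vhat p * (γ p + α p) := by
    have hb : ∫⁻ x, ENNReal.ofReal (-(Vhat x * (γ x + α x)))
        ≤ ENNReal.ofReal a * ENNReal.ofReal (1/2) := by
      calc ∫⁻ x, ENNReal.ofReal (-(Vhat x * (γ x + α x)))
          ≤ ∫⁻ x, ENNReal.ofReal (Vhat x) * ENNReal.ofReal (1/2) := by
            refine lintegral_mono fun x => ?_
            rw [← ENNReal.ofReal_mul (hVpos x)]
            refine ENNReal.ofReal_le_ofReal ?_
            have h1 := aux_nhalf (hγpos x) (hα x)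
            nlinarith [hVpos x]
        _ = ENNReal.ofReal a * ENNReal.ofReal (1/2) := by
            rw [lintegral_mul_const' _ _ (by simp), I1def]
    have := lower_int (f := fun x => Vhat x * (γ x + α x))
      (B := ENNReal.ofReal a * ENNReal.ofReal (1/2)) (by finiteness) hb
    calc -(a/2) = -((ENNReal.ofReal a * ENNReal.ofReal (1/2)).toReal) := by
          rw [← ENNReal.ofReal_mul ha0, ENNReal.toReal_ofReal (by nlinarith [ha0])]
          ring
      _ ≤ _ := this
  -- the quartic term
  set f : E3 → E3 → ℝ := fun p q => Vhat (p - q) * (γ p * γ q + α p * α q) with hfdef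
  set h1 : E3 → E3 → ℝ≥0∞ := fun p q => eK (p - q) * (eγ p * eg q) with hh1
  set h2 : E3 → E3 → ℝ≥0∞ := fun p q => eK (p - q) * (eg p * eγ q) with hh2
  set h3 : E3 → E3 → ℝ≥0∞ := fun p q => eK (p - q) * (eg p * eg q) with hh3
  have hsubm : Measurable fun z : E3 × E3 => eK (z.1 - z.2) :=
    heKm.comp (measurable_fst.sub measurable_snd)
  have hm1 : Measurable (Function.uncurry h1) :=
    hsubm.mul ((heγm.comp measurable_fst).mul (hegm.comp measurable_snd))
  have hm2 : Measurable (Function.uncurry h2) :=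
    hsubm.mul ((hegm.comp measurable_fst).mul (heγm.comp measurable_snd))
  have hm3 : Measurable (Function.uncurry h3) :=
    hsubm.mul ((hegm.comp measurable_fst).mul (hegm.comp measurable_snd))
  set N : E3 → ℝ≥0∞ := fun p => ∫⁻ q, (h1 p q + h2 p q + h3 p q) with hNdef
  have hNm : Measurable N :=
    Measurable.lintegral_prod_right ((hm1.add hm2).add hm3)
  -- Hölder inner bound
  have hHold : ∀ p : E3, ∫⁻ q, eK (p - q) * eg q ≤ I2 * (ENNReal.ofReal R) ^ (1/2:ℝ) := by
    intro p
    have hconj : Real.HolderConjugate 2 2 := Real.holderConjugate_iff.mpr ⟨by norm_num, by norm_num⟩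
    calc ∫⁻ q, eK (p - q) * eg q
        = ∫⁻ q, ((fun q => eK (p - q)) * eg) q := rfl
      _ ≤ (∫⁻ q, eK (p - q) ^ (2:ℝ)) ^ (1/2:ℝ) * (∫⁻ q, eg q ^ (2:ℝ)) ^ (1/2:ℝ) :=
          ENNReal.lintegral_mul_le_Lp_mul_Lq volume hconj
            ((heKm.comp (show Measurable fun q : E3 => p - q by fun_prop)).aemeasurable)
            hegm.aemeasurable
      _ ≤ I2 * (ENNReal.ofReal R) ^ (1/2:ℝ) := by
          refine mul_le_mul ?_ (ENNReal.rpow_le_rpow hEg2 (by norm_num)) (by positivity) (by positivity)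
          rw [show (∫⁻ q, eK (p - q) ^ (2:ℝ)) = ∫⁻ x, eK x ^ (2:ℝ) from
            lint_shift_left _ (heKm.pow_const _) p, hI2eq]
  -- bounds on the three pieces
  have hc_ne : ∀ r : ℝ, ENNReal.ofReal r ≠ ∞ := fun r => ENNReal.ofReal_ne_top
  have hB1fin : I2 * (ENNReal.ofReal R) ^ (1/2:ℝ) ≠ ∞ :=
    ENNReal.mul_ne_top hI2ne (ENNReal.rpow_ne_top_of_nonneg (by norm_num) (hc_ne R))
  have hBa_ne : ENNReal.ofReal a * ENNReal.ofReal R ≠ ∞ :=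
    ENNReal.mul_ne_top ENNReal.ofReal_ne_top ENNReal.ofReal_ne_top
  have hB1tot_ne : I2 * (ENNReal.ofReal R) ^ (1/2:ℝ) * ENNReal.ofReal R ≠ ∞ :=
    ENNReal.mul_ne_top hB1fin ENNReal.ofReal_ne_top
  have hN1 : (∫⁻ p, ∫⁻ q, h1 p q) ≤ I2 * (ENNReal.ofReal R) ^ (1/2:ℝ) * ENNReal.ofReal R := by
    have step : ∀ p, ∫⁻ q, h1 p q ≤ eγ p * (I2 * (ENNReal.ofReal R) ^ (1/2:ℝ)) := by
      intro p
      calc ∫⁻ q, h1 p q = ∫⁻ q, eγ p * (eK (p - q) * eg q) := by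
            refine lintegral_congr fun q => ?_; rw [hh1]; ring
        _ = eγ p * ∫⁻ q, eK (p - q) * eg q := lintegral_const_mul' _ _ (hc_ne _)
        _ ≤ eγ p * (I2 * (ENNReal.ofReal R) ^ (1/2:ℝ)) := mul_le_mul_right (hHold p) _
    calc (∫⁻ p, ∫⁻ q, h1 p q) ≤ ∫⁻ p, eγ p * (I2 * (ENNReal.ofReal R) ^ (1/2:ℝ)) :=
          lintegral_mono step
      _ = ENNReal.ofReal R * (I2 * (ENNReal.ofReal R) ^ (1/2:ℝ)) := by
          rw [lintegral_mul_const' _ _ hB1fin, hRe]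
      _ = I2 * (ENNReal.ofReal R) ^ (1/2:ℝ) * ENNReal.ofReal R := by ring
  have hshiftK : ∀ q : E3, ∫⁻ p, eK (p - q) = ENNReal.ofReal a := by
    intro q; rw [lint_shift_right _ heKm q, ← I1def]
  have hN2 : (∫⁻ p, ∫⁻ q, h2 p q) ≤ ENNReal.ofReal a * ENNReal.ofReal R := by
    calc (∫⁻ p, ∫⁻ q, h2 p q)
        ≤ ∫⁻ p, ∫⁻ q, eK (p - q) * (ENNReal.ofReal (1/2) * eγ q) := by
          refine lintegral_mono fun p => lintegral_mono fun q => ?_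
          rw [hh2]
          exact mul_le_mul_right (mul_le_mul_left
            (ENNReal.ofReal_le_ofReal (hgbh p)) _) _
      _ = ∫⁻ q, ∫⁻ p, eK (p - q) * (ENNReal.ofReal (1/2) * eγ q) := by
          refine lintegral_lintegral_swap ?_
          exact (hsubm.mul ((measurable_const).mul
            (heγm.comp measurable_snd))).aemeasurable
      _ = ∫⁻ q, (ENNReal.ofReal (1/2) * eγ q) * ENNReal.ofReal a := by
          refine lintegral_congr fun q => ?_
          rw [lintegral_mul_const' (ENNReal.ofReal (1/2) * eγ q) (fun p => eK (p - q))
            (ENNReal.mul_ne_top ENNReal.ofReal_ne_top (heγ ▸ ENNReal.ofReal_ne_top)),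
            hshiftK q, mul_comm]
      _ = (ENNReal.ofReal (1/2) * ENNReal.ofReal R) * ENNReal.ofReal a := by
          rw [lintegral_mul_const' _ _ (hc_ne a),
            lintegral_const_mul' _ _ (hc_ne _), hRe]
      _ = ENNReal.ofReal a * (ENNReal.ofReal (1/2) * ENNReal.ofReal R) := by ring
      _ ≤ ENNReal.ofReal a * (1 * ENNReal.ofReal R) := by
          gcongr
          exact ENNReal.ofReal_le_one.mpr (by norm_num)
      _ = ENNReal.ofReal a * ENNReal.ofReal R := by rw [one_mul]
  have hN3 : (∫⁻ p, ∫⁻ q, h3 p q)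
      ≤ ENNReal.ofReal a * ENNReal.ofReal R + ENNReal.ofReal a * ENNReal.ofReal R := by
    have hptw : ∀ p q, h3 p q ≤ eK (p - q) * eg p ^ (2:ℝ) + eK (p - q) * eg q ^ (2:ℝ) := by
      intro p q
      rw [hh3, ← mul_add]
      exact mul_le_mul_right (emul_le_sq _ _) _
    have hsplit : ∀ p, ∫⁻ q, (eK (p - q) * eg p ^ (2:ℝ) + eK (p - q) * eg q ^ (2:ℝ))
        = (∫⁻ q, eK (p - q) * eg p ^ (2:ℝ)) + ∫⁻ q, eK (p - q) * eg q ^ (2:ℝ) := by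
      intro p
      exact lintegral_add_left (f := fun q => eK (p - q) * eg p ^ (2:ℝ))
        ((heKm.comp (show Measurable fun q : E3 => p - q by fun_prop)).mul measurable_const) _
    calc (∫⁻ p, ∫⁻ q, h3 p q)
        ≤ ∫⁻ p, ((∫⁻ q, eK (p - q) * eg p ^ (2:ℝ)) + ∫⁻ q, eK (p - q) * eg q ^ (2:ℝ)) := by
          refine lintegral_mono fun p => ?_
          rw [← hsplit p]
          exact lintegral_mono fun q => hptw p q
      _ = (∫⁻ p, ∫⁻ q, eK (p - q) * eg p ^ (2:ℝ)) + ∫⁻ p, ∫⁻ q, eK (p - q) * eg q ^ (2:ℝ) := by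
          refine lintegral_add_left (f := fun p => ∫⁻ q, eK (p - q) * eg p ^ (2:ℝ)) ?_ _
          exact Measurable.lintegral_prod_right
            (f := fun p q => eK (p - q) * eg p ^ (2:ℝ))
            (hsubm.mul ((hegm.comp measurable_fst).pow_const _))
      _ ≤ ENNReal.ofReal a * ENNReal.ofReal R + ENNReal.ofReal a * ENNReal.ofReal R := by
          refine add_le_add ?_ ?_
          · calc (∫⁻ p, ∫⁻ q, eK (p - q) * eg p ^ (2:ℝ))
                = ∫⁻ p, eg p ^ (2:ℝ) * ENNReal.ofReal a := by
                  refine lintegral_congr fun p => ?_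
                  rw [lintegral_mul_const' _ _ (ENNReal.rpow_ne_top_of_nonneg
                    (by norm_num) (hc_ne _)), lint_shift_left _ heKm p, ← I1def]
                  ring
              _ ≤ ENNReal.ofReal R * ENNReal.ofReal a := by
                  rw [lintegral_mul_const' _ _ (hc_ne a)]
                  exact mul_le_mul_left hEg2 _
              _ = ENNReal.ofReal a * ENNReal.ofReal R := mul_comm _ _
          · calc (∫⁻ p, ∫⁻ q, eK (p - q) * eg q ^ (2:ℝ))
                = ∫⁻ q, ∫⁻ p, eK (p - q) * eg q ^ (2:ℝ) := by
                  refine lintegral_lintegral_swap ?_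
                  exact (hsubm.mul ((hegm.comp measurable_snd).pow_const _)).aemeasurable
              _ = ∫⁻ q, eg q ^ (2:ℝ) * ENNReal.ofReal a := by
                  refine lintegral_congr fun q => ?_
                  rw [lintegral_mul_const' _ _ (ENNReal.rpow_ne_top_of_nonneg
                    (by norm_num) (hc_ne _)), hshiftK q]
                  ring
              _ ≤ ENNReal.ofReal R * ENNReal.ofReal a := by
                  rw [lintegral_mul_const' _ _ (hc_ne a)]
                  exact mul_le_mul_left hEg2 _
              _ = ENNReal.ofReal a * ENNReal.ofReal R := mul_comm _ _
  -- total
  set Btot : ℝ≥0∞ := I2 * (ENNReal.ofReal R) ^ (1/2:ℝ) * ENNReal.ofReal R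
      + (ENNReal.ofReal a * ENNReal.ofReal R
        + (ENNReal.ofReal a * ENNReal.ofReal R + ENNReal.ofReal a * ENNReal.ofReal R))
    with hBtotdef
  have hBtot_ne : Btot ≠ ∞ := by
    rw [hBtotdef]
    exact ENNReal.add_ne_top.mpr ⟨hB1tot_ne,
      ENNReal.add_ne_top.mpr ⟨hBa_ne, ENNReal.add_ne_top.mpr ⟨hBa_ne, hBa_ne⟩⟩⟩
  have hNtot : ∫⁻ p, N p ≤ Btot := by
    have hsplit : ∀ p, N p = (∫⁻ q, h1 p q) + ((∫⁻ q, h2 p q) + (∫⁻ q, h3 p q)) := by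
      intro p
      rw [hNdef]
      simp only []
      rw [show (fun q => h1 p q + h2 p q + h3 p q) = fun q => h1 p q + (h2 p q + h3 p q) by
        funext q; ring]
      rw [lintegral_add_left (f := fun q => h1 p q) (hm1.comp measurable_prodMk_left) _]
      congr 1
      exact lintegral_add_left (f := fun q => h2 p q) (hm2.comp measurable_prodMk_left) _
    calc ∫⁻ p, N p
        = (∫⁻ p, ∫⁻ q, h1 p q) + ((∫⁻ p, ∫⁻ q, h2 p q) + (∫⁻ p, ∫⁻ q, h3 p q)) := by
          simp_rw [hsplit]
          rw [lintegral_add_left (f := fun p => ∫⁻ q, h1 p q)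
            (Measurable.lintegral_prod_right hm1) _,
            lintegral_add_left (f := fun p => ∫⁻ q, h2 p q)
            (Measurable.lintegral_prod_right hm2) _]
      _ ≤ Btot := by
          rw [hBtotdef]
          exact add_le_add hN1 (add_le_add hN2 hN3)
  have hNfin : ∀ᵐ p : E3, N p < ∞ := ae_lt_top hNm (hNtot.trans_lt (hBtot_ne.lt_top)).ne
  have habs : ∀ x : E3, γ x = γb x → |α x| ≤ γb x + gb x := by
    intro x hx
    have h := aux_abs (hγpos x) (hα x)
    rw [hx] at h
    exact h
  clear_value N h1 h2 h3 eγ eg gb γb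
  -- pointwise bound
  have hpw : ∀ p q : E3, γ p = γb p → γ q = γb q →
      ENNReal.ofReal (-(f p q)) ≤ h1 p q + h2 p q + h3 p q := by
    intro p q hp hq
    have habs_p : |α p| ≤ γb p + gb p := habs p hp
    have habs_q : |α q| ≤ γb q + gb q := habs q hq
    have hprod : -((γb p + gb p) * (γb q + gb q)) ≤ α p * α q := by
      have h1' : |α p * α q| ≤ (γb p + gb p) * (γb q + gb q) := by
        rw [abs_mul]
        exact mul_le_mul habs_p habs_q (abs_nonneg _) (add_nonneg (hγb0 p) (hgb0 p))
      linarith [neg_abs_le (α p * α q)]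
    have hsum : (0:ℝ) ≤ γb p * γb q + α p * α q
        + (γb p * gb q + gb p * γb q + gb p * gb q) := by nlinarith [hprod]
    have key : -(f p q) ≤ Vhat (p - q) * (γb p * gb q)
        + (Vhat (p - q) * (gb p * γb q) + Vhat (p - q) * (gb p * gb q)) := by
      have hKnn := hVpos (p - q)
      have hKs := mul_nonneg hKnn hsum
      rw [hfdef]
      simp only
      rw [hp, hq]
      nlinarith [hKs]
    calc ENNReal.ofReal (-(f p q))
        ≤ ENNReal.ofReal (Vhat (p - q) * (γb p * gb q)
            + (Vhat (p - q) * (gb p * γb q) + Vhat (p - q) * (gb p * gb q))) :=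
          ENNReal.ofReal_le_ofReal key
      _ = h1 p q + h2 p q + h3 p q := by
          rw [ENNReal.ofReal_add (mul_nonneg (hVpos _) (mul_nonneg (hγb0 p) (hgb0 q)))
              (add_nonneg (mul_nonneg (hVpos _) (mul_nonneg (hgb0 p) (hγb0 q)))
                (mul_nonneg (hVpos _) (mul_nonneg (hgb0 p) (hgb0 q)))),
            ENNReal.ofReal_add (mul_nonneg (hVpos _) (mul_nonneg (hgb0 p) (hγb0 q)))
              (mul_nonneg (hVpos _) (mul_nonneg (hgb0 p) (hgb0 q))),
            hh1, hh2, hh3, heK, heγ, heg]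
          simp only
          rw [ENNReal.ofReal_mul (hVpos _), ENNReal.ofReal_mul (hVpos _),
            ENNReal.ofReal_mul (hVpos _), ENNReal.ofReal_mul (hγb0 p),
            ENNReal.ofReal_mul (hgb0 p), ENNReal.ofReal_mul (hgb0 p)]
          ring
  -- inner a.e. bound
  have hInner : ∀ᵐ p : E3, ENNReal.ofReal (-(∫ q, f p q)) ≤ N p := by
    filter_upwards [hNfin, hγbe] with p hfin hp
    have hq_ae : ∀ᵐ q : E3, ENNReal.ofReal (-(f p q)) ≤ h1 p q + h2 p q + h3 p q := by
      filter_upwards [hγbe] with q hq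
      exact hpw p q hp hq
    have hle : ∫⁻ q, ENNReal.ofReal (-(f p q)) ≤ N p := by
      rw [hNdef]
      exact lintegral_mono_ae hq_ae
    have hlow : -((N p).toReal) ≤ ∫ q, f p q := lower_int hfin.ne hle
    calc ENNReal.ofReal (-(∫ q, f p q)) ≤ ENNReal.ofReal ((N p).toReal) :=
        ENNReal.ofReal_le_ofReal (by linarith)
      _ = N p := ENNReal.ofReal_toReal hfin.ne
  have hDlow : -(Btot.toReal) ≤ ∫ p, ∫ q, f p q :=
    lower_int hBtot_ne ((lintegral_mono_ae hInner).trans hNtot)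
  have hDlow' : -(Btot.toReal) ≤ ∫ p, ∫ q, Vhat (p - q) * (γ p * γ q + α p * α q) := by
    simpa only [hfdef] using hDlow
  -- compute Btot.toReal
  set t : ℝ := Real.sqrt R with htdef
  have ht0 : 0 ≤ t := Real.sqrt_nonneg R
  have ht2 : t ^ 2 = R := Real.sq_sqrt hR0
  have hBle : Btot.toReal ≤ s2 * (t * R) + (a * R + (a * R + a * R)) := by
    rw [hBtotdef]
    rw [ENNReal.toReal_add hB1tot_ne (ENNReal.add_ne_top.mpr
        ⟨hBa_ne, ENNReal.add_ne_top.mpr ⟨hBa_ne, hBa_ne⟩⟩),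
      ENNReal.toReal_add hBa_ne (ENNReal.add_ne_top.mpr ⟨hBa_ne, hBa_ne⟩),
      ENNReal.toReal_add hBa_ne hBa_ne]
    simp only [ENNReal.toReal_mul, ← ENNReal.toReal_rpow, ENNReal.toReal_ofReal hR0,
      ENNReal.toReal_ofReal ha0, ← hs2def]
    rw [← Real.sqrt_eq_rpow, ← htdef]
    apply le_of_eq
    ring
  -- final assembly
  rw [show bogF Vhat μ γ α ρ₀ =
      (∫ p, ‖p‖ ^ 2 * γ p) - μ * (ρ₀ + ∫ p, γ p) + Vhat 0 / 2 * (ρ₀ + ∫ p, γ p) ^ 2 +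
        ρ₀ * (∫ p, Vhat p * (γ p + α p)) +
        1 / 2 * ∫ p, ∫ q, Vhat (p - q) * (γ p * γ q + α p * α q) from rfl]
  rw [← hRdef, ← hV0def]
  set T : ℝ := ∫ p, ‖p‖ ^ 2 * γ p with hTdef
  set Aint : ℝ := ∫ p, Vhat p * (γ p + α p) with hAintdef
  set Dint : ℝ := ∫ p, ∫ q, Vhat (p - q) * (γ p * γ q + α p * α q) with hDintdef
  have hDt : -(s2 * (t * R) + (a * R + (a * R + a * R))) ≤ Dint := by
    calc -(s2 * (t * R) + (a * R + (a * R + a * R))) ≤ -(Btot.toReal) := by linarith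
      _ ≤ Dint := hDlow'
  have hAt : ρ₀ * (-(a / 2)) ≤ ρ₀ * Aint := mul_le_mul_of_nonneg_left hAterm hρ₀
  have hcub' : s2 / 2 * t ^ 3 ≤ V0 / 8 * R ^ 2 + Bc * R := by
    have h := hBc t ht0
    have ht4 : t ^ 4 = R ^ 2 := by rw [← ht2]; ring
    rw [ht4, ht2] at h
    exact h
  have hq1 := hC1 ρ₀ hρ₀
  have hq2 := hC2 R hR0
  have hcross : 0 ≤ V0 * (ρ₀ * R) := mul_nonneg hV0.le (mul_nonneg hρ₀ hR0)
  have htR : t * R = t ^ 3 := by rw [← ht2]; ring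
  nlinarith [hq1, hq2, hcub', hcross, hDt, hAt, htR, ht2]
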